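/- arXiv:1910.14032 — 2 statements merged into one kernel-verified Lean document; each statement's English description precedes it below -/
import Mathlib

section
/- For a balanced ensemble of pure test states (d Σ_j p_j ρ_j = 1), the preparation operator Θ_P = d Σ_j p_j ρ_j ⊗ ρ_j* satisfies |Φ⟩⟨Φ| ≤ Θ_P ≤ 1, and |Φ⟩ is an eigenvector of Θ_P with eigenvalue 1. -/
open scoped Matrix Kronecker ComplexOrder Matrix.Norms.L2Operator

/-- The rank-one projector `|ψ⟩⟨ψ|` of a vector `ψ`. -/
noncomputable def proj {n : Type*} [Fintype n] (ψ : n → ℂ) : Matrix n n ℂ :=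
  Matrix.vecMulVec ψ (star ψ)

/-- The maximally entangled vector `Φ = (1/√d) ∑ⱼ |jj⟩`. -/
noncomputable def maxEnt (d : ℕ) : Fin d × Fin d → ℂ :=
  fun p => if p.1 = p.2 then (1 / Real.sqrt d : ℝ) else 0

lemma proj_posSemidef {n : Type*} [Fintype n] (ψ : n → ℂ) : (proj ψ).PosSemidef := by
  rw [proj, Matrix.vecMulVec_eq Unit, ← Matrix.conjTranspose_replicateCol]
  exact Matrix.posSemidef_self_mul_conjTranspose _

lemma kron_conjT {m n : Type*} [Fintype m] [Fintype n] (A : Matrix m m ℂ) (B : Matrix n n ℂ) :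
    (A ⊗ₖ B)ᴴ = Aᴴ ⊗ₖ Bᴴ := by
  ext ⟨i, k⟩ ⟨i', k'⟩
  simp [Matrix.conjTranspose_apply, mul_comm]

lemma kron_psd {m n : Type*} [Fintype m] [Fintype n] [DecidableEq m] [DecidableEq n]
    {A : Matrix m m ℂ} {B : Matrix n n ℂ}
    (hA : A.PosSemidef) (hB : B.PosSemidef) : (A ⊗ₖ B).PosSemidef := by
  exact hA.kronecker hB

lemma psd_smul {n : Type*} [Fintype n] {M : Matrix n n ℂ} (hM : M.PosSemidef)
    {c : ℝ} (hc : 0 ≤ c) : (((c : ℂ)) • M).PosSemidef := by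
  constructor
  · show _ = _
    rw [Matrix.conjTranspose_smul, hM.1.eq]
    congr 1
    simp [Complex.star_def, Complex.conj_ofReal]
  · intro x
    exact (hM.smul (a := (c : ℂ)) (Complex.zero_le_real.mpr hc)).2 x

lemma psd_sum {ι n : Type*} [Fintype n] (s : Finset ι) (f : ι → Matrix n n ℂ)
    (h : ∀ i ∈ s, (f i).PosSemidef) : (∑ i ∈ s, f i).PosSemidef :=
  Finset.sum_induction f _ (fun _ _ ha hb => ha.add hb) Matrix.PosSemidef.zero h

lemma proj_mulVec {n : Type*} [Fintype n] (ψ x : n → ℂ) :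
    (proj ψ) *ᵥ x = (star ψ ⬝ᵥ x) • ψ := by
  ext i
  simp only [proj, Matrix.mulVec, dotProduct, Matrix.vecMulVec_apply, Pi.star_apply,
    Pi.smul_apply, smul_eq_mul, Finset.sum_mul]
  exact Finset.sum_congr rfl fun k _ => by ring

lemma one_sub_proj_psd {n : Type*} [Fintype n] [DecidableEq n] (χ : n → ℂ)
    (hχ : star χ ⬝ᵥ χ = 1) : ((1 : Matrix n n ℂ) - proj χ).PosSemidef := by
  have hP : proj χ * proj χ = proj χ := by
    ext i k
    simp only [Matrix.mul_apply, proj, Matrix.vecMulVec_apply, Pi.star_apply]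
    calc ∑ m, (χ i * star (χ m)) * (χ m * star (χ k))
        = (χ i * star (χ k)) * ∑ m, star (χ m) * χ m := by
          rw [Finset.mul_sum]; exact Finset.sum_congr rfl fun m _ => by ring
      _ = χ i * star (χ k) := by
          rw [show (∑ m, star (χ m) * χ m) = star χ ⬝ᵥ χ from rfl, hχ, mul_one]
  have hH : (proj χ)ᴴ = proj χ := (proj_posSemidef χ).1.eq
  have key : (1 : Matrix n n ℂ) - proj χ = ((1 : Matrix n n ℂ) - proj χ)ᴴ * (1 - proj χ) := by
    rw [Matrix.conjTranspose_sub, Matrix.conjTranspose_one, hH, sub_mul, one_mul, mul_sub,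
      mul_one, hP]
    abel
  rw [key]
  exact Matrix.posSemidef_conjTranspose_mul_self _

lemma sum_mulVec' {ι n : Type*} [Fintype n] [Fintype ι] (f : ι → Matrix n n ℂ) (x : n → ℂ) :
    (∑ j, f j) *ᵥ x = ∑ j, (f j) *ᵥ x := by
  ext i
  simp [Matrix.mulVec, dotProduct, Matrix.sum_apply, Finset.sum_mul]
  rw [Finset.sum_comm]

lemma kron_sub_right {m n : Type*} [Fintype m] [Fintype n] (A : Matrix m m ℂ)
    (B C : Matrix n n ℂ) : A ⊗ₖ (B - C) = A ⊗ₖ B - A ⊗ₖ C := by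
  ext ⟨i, k⟩ ⟨i', k'⟩
  simp [mul_sub]

lemma sum_kron_left {ι m n : Type*} [Fintype ι] [Fintype m] [Fintype n]
    (f : ι → Matrix m m ℂ) (B : Matrix n n ℂ) : (∑ j, f j) ⊗ₖ B = ∑ j, f j ⊗ₖ B := by
  ext ⟨i, k⟩ ⟨i', k'⟩
  simp [Matrix.sum_apply, Finset.sum_mul]

/-- for a balanced ensemble of pure test states (`d ∑ⱼ p_j ρ_j = 1`), the
preparation operator `Θ_P = d ∑ⱼ p_j ρ_j ⊗ ρ_j*` satisfies `|Φ⟩⟨Φ| ≤ Θ_P ≤ 1`, and `|Φ⟩`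
is an eigenvector of `Θ_P` with eigenvalue `1`. -/
theorem stmt_12 (d : ℕ) (hd : 0 < d) {ι : Type} [Fintype ι]
    (p : ι → ℝ) (hp : ∀ j, 0 ≤ p j) (hpsum : ∑ j, p j = 1)
    (ψ : ι → Fin d → ℂ) (hψ : ∀ j, star (ψ j) ⬝ᵥ ψ j = 1)
    (hbal : (d : ℂ) • ∑ j, (p j : ℂ) • proj (ψ j) = (1 : Matrix (Fin d) (Fin d) ℂ))
    (ΘP : Matrix (Fin d × Fin d) (Fin d × Fin d) ℂ)
    (hΘP : ΘP = (d : ℂ) • ∑ j, (p j : ℂ) •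
      (proj (ψ j) ⊗ₖ (proj (ψ j)).map (starRingEnd ℂ))) :
    (ΘP - proj (maxEnt d)).PosSemidef ∧
      ((1 : Matrix (Fin d × Fin d) (Fin d × Fin d) ℂ) - ΘP).PosSemidef ∧
      ΘP.mulVec (maxEnt d) = maxEnt d := by
  classical
  set s : ℂ := ((Real.sqrt d : ℝ) : ℂ) with hs_def
  have hdr : (0:ℝ) < d := by exact_mod_cast hd
  have hsr : (0:ℝ) < Real.sqrt d := Real.sqrt_pos.mpr hdr
  have hs0 : s ≠ 0 := by
    rw [hs_def]; exact_mod_cast hsr.ne'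
  have hss : s * s = (d : ℂ) := by
    rw [hs_def, ← Complex.ofReal_mul, Real.mul_self_sqrt hdr.le]
    norm_cast
  have hstars : star s = s := by
    rw [hs_def]; exact Complex.conj_ofReal _
  have hd0 : (d : ℂ) ≠ 0 := by exact_mod_cast hd.ne'
  set v : ι → (Fin d × Fin d → ℂ) := fun j a => ψ j a.1 * star (ψ j a.2) with hv_def
  have hΦ : ∀ a : Fin d × Fin d, maxEnt d a = if a.1 = a.2 then s⁻¹ else 0 := by
    intro a
    rw [maxEnt, hs_def]
    split
    · push_cast; rw [one_div]
    · rfl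
  have hpc : ∑ j, (p j : ℂ) = 1 := by exact_mod_cast hpsum
  have hkron : ∀ j, proj (ψ j) ⊗ₖ (proj (ψ j)).map (starRingEnd ℂ) = proj (v j) := by
    intro j
    ext ⟨i, k⟩ ⟨i', k'⟩
    simp only [Matrix.kroneckerMap_apply, proj, Matrix.vecMulVec_apply, Matrix.map_apply,
      Pi.star_apply, hv_def, starRingEnd_apply, star_mul', star_star]
    ring
  have hbalE : ∀ a : Fin d × Fin d, ∑ j, (p j : ℂ) * v j a = s⁻¹ * maxEnt d a := by
    intro a
    have h1 := congrFun (congrFun hbal a.1) a.2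
    simp only [Matrix.smul_apply, Matrix.sum_apply, Matrix.one_apply, proj,
      Matrix.vecMulVec_apply, Pi.star_apply, smul_eq_mul] at h1
    rw [hΦ a]
    split_ifs with h
    · rw [if_pos h] at h1
      have : ∑ j, (p j : ℂ) * v j a = (d : ℂ)⁻¹ := by
        field_simp
        rw [mul_comm]
        exact h1
      rw [this, ← hss, mul_inv]
    · rw [if_neg h] at h1
      rw [mul_zero]
      exact (mul_eq_zero.mp h1).resolve_left hd0
  have hbalEs : ∀ a : Fin d × Fin d, ∑ j, (p j : ℂ) * star (v j a) = s⁻¹ * star (maxEnt d a) := by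
    intro a
    have h := congrArg star (hbalE a)
    rw [star_sum] at h
    rw [show s⁻¹ * star (maxEnt d a) = star (s⁻¹ * maxEnt d a) by
      rw [star_mul', star_inv₀, hstars, mul_comm], ← h]
    refine Finset.sum_congr rfl fun j _ => ?_
    conv_rhs => rw [star_mul']
    simp [mul_comm]
  have hΘP' : ΘP = (d : ℂ) • ∑ j, (p j : ℂ) • proj (v j) := by
    rw [hΘP]
    congr 1
    exact Finset.sum_congr rfl fun j _ => by rw [hkron j]
  -- eigenvector property
  have hdot : ∀ j, star (v j) ⬝ᵥ maxEnt d = s⁻¹ := by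
    intro j
    have step : star (v j) ⬝ᵥ maxEnt d = (∑ i, star (ψ j i) * ψ j i) * s⁻¹ := by
      simp only [dotProduct, Pi.star_apply, Fintype.sum_prod_type]
      rw [Finset.sum_mul]
      refine Finset.sum_congr rfl fun i _ => ?_
      rw [Finset.sum_eq_single i]
      · rw [hΦ (i, i)]
        simp only [if_pos rfl, ite_true, if_true, hv_def, star_mul', star_star]
        try ring
      · intro k _ hk
        rw [hΦ (i, k)]
        simp only [if_neg (fun hik : i = k => hk hik.symm)]
        ring
      · intro h; exact absurd (Finset.mem_univ i) h
    rw [step, show (∑ i, star (ψ j i) * ψ j i) = star (ψ j) ⬝ᵥ ψ j from rfl, hψ j, one_mul]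
  have hmv : ΘP *ᵥ maxEnt d = maxEnt d := by
    rw [hΘP', Matrix.smul_mulVec, sum_mulVec']
    rw [Finset.sum_congr rfl fun j _ => by
      rw [Matrix.smul_mulVec, proj_mulVec, hdot j]]
    ext a
    simp only [Pi.smul_apply, Finset.sum_apply, smul_eq_mul]
    rw [show (∑ j, (p j : ℂ) * (s⁻¹ * v j a)) = s⁻¹ * ∑ j, (p j : ℂ) * v j a by
      rw [Finset.mul_sum]; exact Finset.sum_congr rfl fun j _ => by ring]
    rw [hbalE a, ← hss]
    field_simp
  -- Θ - |Φ⟩⟨Φ| ≥ 0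
  have key1 : ΘP - proj (maxEnt d)
      = ∑ j, (p j : ℂ) • proj (fun a => s * v j a - maxEnt d a) := by
    ext a b
    simp only [Matrix.sub_apply, hΘP', Matrix.smul_apply, Matrix.sum_apply, proj,
      Matrix.vecMulVec_apply, Pi.star_apply, smul_eq_mul]
    rw [Finset.sum_congr rfl fun j _ => show
        (p j : ℂ) * ((s * v j a - maxEnt d a) * star (s * v j b - maxEnt d b))
        = (s * s) * ((p j : ℂ) * (v j a * star (v j b)))
          - (s * star (maxEnt d b)) * ((p j : ℂ) * v j a)
          - (s * maxEnt d a) * ((p j : ℂ) * star (v j b))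
          + (maxEnt d a * star (maxEnt d b)) * (p j : ℂ) by
      rw [star_sub, star_mul', hstars]; ring]
    rw [Finset.sum_add_distrib, Finset.sum_sub_distrib, Finset.sum_sub_distrib,
      ← Finset.mul_sum, ← Finset.mul_sum, ← Finset.mul_sum, ← Finset.mul_sum,
      hbalE a, hbalEs b, hpc, mul_one, hss]
    field_simp
    ring
  have goal1 : (ΘP - proj (maxEnt d)).PosSemidef := by
    rw [key1]
    exact psd_sum _ _ fun j _ => psd_smul (proj_posSemidef _) (hp j)
  -- 1 - Θ ≥ 0
  have hmapconj : ∀ j, (proj (ψ j)).map (starRingEnd ℂ) = proj (star (ψ j)) := by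
    intro j
    ext i k
    simp only [proj, Matrix.map_apply, Matrix.vecMulVec_apply, Pi.star_apply,
      starRingEnd_apply, star_mul', star_star]
    try ring
  have key2 : (1 : Matrix (Fin d × Fin d) (Fin d × Fin d) ℂ) - ΘP
      = ∑ j, ((d * p j : ℝ) : ℂ) •
          (proj (ψ j) ⊗ₖ ((1 : Matrix (Fin d) (Fin d) ℂ) - proj (star (ψ j)))) := by
    have expand : ∀ j, ((d * p j : ℝ) : ℂ) •
          (proj (ψ j) ⊗ₖ ((1 : Matrix (Fin d) (Fin d) ℂ) - proj (star (ψ j))))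
        = (d : ℂ) • ((p j : ℂ) • (proj (ψ j) ⊗ₖ (1 : Matrix (Fin d) (Fin d) ℂ)))
          - (d : ℂ) • ((p j : ℂ) • (proj (ψ j) ⊗ₖ proj (star (ψ j)))) := by
      intro j
      have hc : ((d * p j : ℝ) : ℂ) = (d : ℂ) * (p j : ℂ) := by push_cast; ring
      rw [hc, kron_sub_right, smul_sub, smul_smul, smul_smul]
    rw [Finset.sum_congr rfl fun j _ => expand j, Finset.sum_sub_distrib,
      ← Finset.smul_sum, ← Finset.smul_sum]
    congr 1
    · calc (1 : Matrix (Fin d × Fin d) (Fin d × Fin d) ℂ)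
          = (1 : Matrix (Fin d) (Fin d) ℂ) ⊗ₖ (1 : Matrix (Fin d) (Fin d) ℂ) :=
            Matrix.one_kronecker_one.symm
        _ = ((d : ℂ) • ∑ j, (p j : ℂ) • proj (ψ j)) ⊗ₖ (1 : Matrix (Fin d) (Fin d) ℂ) := by
            rw [hbal]
        _ = (d : ℂ) • ((∑ j, (p j : ℂ) • proj (ψ j)) ⊗ₖ (1 : Matrix (Fin d) (Fin d) ℂ)) := by
            rw [Matrix.smul_kronecker]
        _ = (d : ℂ) • ∑ j, ((p j : ℂ) • proj (ψ j)) ⊗ₖ (1 : Matrix (Fin d) (Fin d) ℂ) := by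
            rw [sum_kron_left]
        _ = (d : ℂ) • ∑ j, (p j : ℂ) • (proj (ψ j) ⊗ₖ (1 : Matrix (Fin d) (Fin d) ℂ)) := by
            congr 1
            exact Finset.sum_congr rfl fun j _ => Matrix.smul_kronecker _ _ _
    · rw [hΘP]
      congr 1
      refine Finset.sum_congr rfl fun j _ => ?_
      rw [hmapconj j]
  have goal2 : ((1 : Matrix (Fin d × Fin d) (Fin d × Fin d) ℂ) - ΘP).PosSemidef := by
    rw [key2]
    refine psd_sum _ _ fun j _ => psd_smul
      (kron_psd (proj_posSemidef _) (one_sub_proj_psd _ ?_))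
      (mul_nonneg (Nat.cast_nonneg d) (hp j))
    rw [star_star, dotProduct_comm]
    exact hψ j
  exact ⟨goal1, goal2, hmv⟩
end

section
/- For a balanced strategy with process verification operator Θ satisfying |Φ⟩⟨Φ| ≤ Θ ≤ 1 and spectral gap ν = 1 − ‖Θ − |Φ⟩⟨Φ|‖, the maximal passing probability satisfies p_E(Θ, ε) ≤ 1 − νε for all ε ∈ [0,1]. -/
open scoped Matrix Kronecker ComplexOrder Matrix.Norms.L2Operator

/-- Partial trace over the first tensor factor. -/
noncomputable def ptrace1 {d : ℕ} (M : Matrix (Fin d × Fin d) (Fin d × Fin d) ℂ) :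
    Matrix (Fin d) (Fin d) ℂ :=
  fun j l => ∑ a, M (a, j) (a, l)

/-- The maximal passing probability
`p_E(Θ, ε) := max { tr(Θ χ) : χ ≥ 0, tr₁ χ = 1/d, ⟨Φ|χ|Φ⟩ ≤ 1 − ε }`. -/
noncomputable def pE (d : ℕ) (Θ : Matrix (Fin d × Fin d) (Fin d × Fin d) ℂ) (ε : ℝ) : ℝ :=
  sSup { x : ℝ | ∃ χ : Matrix (Fin d × Fin d) (Fin d × Fin d) ℂ,
    χ.PosSemidef ∧ ptrace1 χ = (1 / (d : ℂ)) • (1 : Matrix (Fin d) (Fin d) ℂ) ∧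
    (star (maxEnt d) ⬝ᵥ χ.mulVec (maxEnt d)).re ≤ 1 - ε ∧ x = ((Θ * χ).trace).re }

section Aux

variable {n : Type*} [Fintype n] [DecidableEq n]

lemma complex_nonneg_iff {z : ℂ} : 0 ≤ z ↔ 0 ≤ z.re ∧ z.im = 0 := by
  rw [Complex.le_def]; constructor <;> rintro ⟨h1, h2⟩ <;> simp_all [eq_comm]

lemma psd_diag_nonneg {M : Matrix n n ℂ} (hM : M.PosSemidef) (i : n) : 0 ≤ M i i := by
  have h := hM.dotProduct_mulVec_nonneg (Pi.single i 1)
  simpa [dotProduct, Matrix.mulVec, Pi.single_apply, apply_ite, mul_ite, ite_mul,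
    Finset.sum_ite_eq, Finset.sum_ite_eq'] using h

lemma psd_trace_nonneg {M : Matrix n n ℂ} (hM : M.PosSemidef) : 0 ≤ M.trace := by
  rw [Matrix.trace]
  exact Finset.sum_nonneg fun i _ => psd_diag_nonneg hM i

lemma trace_mul_psd_nonneg {A B : Matrix n n ℂ} (hA : A.PosSemidef) (hB : B.PosSemidef) :
    0 ≤ (A * B).trace := by
  open scoped MatrixOrder in obtain ⟨C, rfl⟩ := CStarAlgebra.nonneg_iff_eq_star_mul_self.mp hB.nonneg
  rw [← mul_assoc, Matrix.trace_mul_cycle]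
  exact psd_trace_nonneg (hA.mul_mul_conjTranspose_same C)

/-- Cauchy–Schwarz / operator norm bound on the quadratic form. -/
lemma quad_re_le_norm (A : Matrix n n ℂ) (x : n → ℂ) :
    (star x ⬝ᵥ A.mulVec x).re ≤ ‖A‖ * (star x ⬝ᵥ x).re := by
  set x' : EuclideanSpace ℂ n := (WithLp.equiv 2 _).symm x with hx'
  have h1 : star x ⬝ᵥ A.mulVec x
      = inner ℂ x' ((WithLp.equiv 2 _).symm (A.mulVec x) : EuclideanSpace ℂ n) :=
    ((EuclideanSpace.inner_toLp_toLp x (A.mulVec x)).trans (dotProduct_comm _ _)).symm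
  have h2 : (star x ⬝ᵥ x) = inner ℂ x' x' :=
    ((EuclideanSpace.inner_toLp_toLp x x).trans (dotProduct_comm _ _)).symm
  have h3 : ‖((WithLp.equiv 2 _).symm (A.mulVec x) : EuclideanSpace ℂ n)‖ ≤ ‖A‖ * ‖x'‖ :=
    A.l2_opNorm_mulVec x'
  have h4 : (star x ⬝ᵥ A.mulVec x).re ≤ ‖x'‖ * (‖A‖ * ‖x'‖) := by
    calc (star x ⬝ᵥ A.mulVec x).re
        ≤ ‖star x ⬝ᵥ A.mulVec x‖ := Complex.re_le_norm _
      _ = ‖inner ℂ x' ((WithLp.equiv 2 _).symm (A.mulVec x) : EuclideanSpace ℂ n)‖ := by rw [h1]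
      _ ≤ ‖x'‖ * ‖((WithLp.equiv 2 _).symm (A.mulVec x) : EuclideanSpace ℂ n)‖ :=
          norm_inner_le_norm _ _
      _ ≤ ‖x'‖ * (‖A‖ * ‖x'‖) := by
          exact mul_le_mul_of_nonneg_left h3 (norm_nonneg _)
  have h5 : (star x ⬝ᵥ x).re = ‖x'‖ ^ 2 := by
    rw [h2]
    exact inner_self_eq_norm_sq (𝕜 := ℂ) x'
  rw [h5]; ring_nf; ring_nf at h4; linarith

/-- The key Loewner inequality: if `A ≥ 0`, `P` a Hermitian idempotent with `AP = PA = 0`,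
then `A ≤ ‖A‖ (1 - P)`. -/
lemma key_psd {A P : Matrix n n ℂ} (hA : A.PosSemidef) (hP : P.IsHermitian)
    (hP2 : P * P = P) (hAP : A * P = 0) (hPA : P * A = 0) :
    ((‖A‖ : ℂ) • ((1 : Matrix n n ℂ) - P) - A).PosSemidef := by
  set Q : Matrix n n ℂ := (1 : Matrix n n ℂ) - P with hQ
  have hQH : Qᴴ = Q := by
    rw [hQ, Matrix.conjTranspose_sub, Matrix.conjTranspose_one, hP]
  have hQ2 : Q * Q = Q := by
    rw [hQ]; simp [Matrix.mul_sub, Matrix.sub_mul, hP2]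
  have hQA : Q * A = A := by rw [hQ]; simp [Matrix.sub_mul, hPA]
  have hAQ : A * Q = A := by rw [hQ]; simp [Matrix.mul_sub, hAP]
  refine Matrix.PosSemidef.of_dotProduct_mulVec_nonneg ?_ ?_
  · unfold Matrix.IsHermitian
    rw [Matrix.conjTranspose_sub, Matrix.conjTranspose_smul, hQH, hA.1]
    norm_num
  · intro x
    set y : n → ℂ := Q.mulVec x with hy
    have hmv : (((‖A‖ : ℂ) • Q - A)).mulVec x
        = (‖A‖ : ℂ) • Q.mulVec x - A.mulVec x := by
      rw [Matrix.sub_mulVec, Matrix.smul_mulVec]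
    have hAx : A.mulVec x = A.mulVec y := by
      rw [hy, Matrix.mulVec_mulVec, hAQ]
    have hsy : star x ⬝ᵥ y = star y ⬝ᵥ y := by
      conv_rhs => rw [hy, Matrix.star_mulVec, hQH]
      rw [← Matrix.dotProduct_mulVec, hy, Matrix.mulVec_mulVec, hQ2]
    have hqy : star x ⬝ᵥ A.mulVec x = star y ⬝ᵥ A.mulVec y := by
      conv_rhs => rw [hy, Matrix.star_mulVec, hQH]
      rw [← Matrix.dotProduct_mulVec, Matrix.mulVec_mulVec, hQA, ← hAx]
    have hq := hA.dotProduct_mulVec_nonneg y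
    rw [complex_nonneg_iff] at hq
    have hcs := quad_re_le_norm A y
    have hs1 : (0 : ℂ) ≤ star y ⬝ᵥ y := by
      have h := (Matrix.PosSemidef.one (n := n) (R := ℂ)).dotProduct_mulVec_nonneg y
      rwa [Matrix.one_mulVec] at h
    rw [complex_nonneg_iff] at hs1
    have hs : star y ⬝ᵥ y = ((star y ⬝ᵥ y).re : ℂ) := by
      rw [Complex.ext_iff]; exact ⟨rfl, by simp [hs1.2]⟩
    rw [hmv, dotProduct_sub, dotProduct_smul, hqy, ← hy, hsy]
    rw [smul_eq_mul, complex_nonneg_iff]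
    set s := star y ⬝ᵥ y
    set q := star y ⬝ᵥ A.mulVec y
    constructor
    · have : ((‖A‖ : ℂ) * s).re = ‖A‖ * s.re := by
        rw [hs]; simp [← Complex.ofReal_mul]
      rw [Complex.sub_re, this]
      linarith
    · rw [Complex.sub_im, hq.2, hs]
      simp [← Complex.ofReal_mul]

end Aux

section ProjLemmas

variable {n : Type*} [Fintype n] [DecidableEq n]

lemma proj_isHermitian (ψ : n → ℂ) : (proj ψ).IsHermitian := by
  ext i j
  simp only [proj, Matrix.conjTranspose_apply, Matrix.vecMulVec_apply, Pi.star_apply]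
  simp [mul_comm]

lemma proj_mul_proj {ψ : n → ℂ} (hψ : star ψ ⬝ᵥ ψ = 1) : proj ψ * proj ψ = proj ψ := by
  ext i j
  simp only [Matrix.mul_apply, proj, Matrix.vecMulVec_apply, Pi.star_apply]
  have : ∑ q, ψ i * star (ψ q) * (ψ q * star (ψ j))
      = (∑ q, star (ψ q) * ψ q) * (ψ i * star (ψ j)) := by
    rw [Finset.sum_mul]
    exact Finset.sum_congr rfl fun q _ => by ring
  rw [this]
  rw [show (∑ q, star (ψ q) * ψ q) = (1 : ℂ) from hψ]
  ring

lemma mul_proj_eq_zero {A : Matrix n n ℂ} {ψ : n → ℂ} (h : A.mulVec ψ = 0) :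
    A * proj ψ = 0 := by
  ext p q
  simp only [Matrix.mul_apply, proj, Matrix.vecMulVec_apply, Pi.star_apply, Matrix.zero_apply]
  have hp : ∑ r, A p r * ψ r = 0 := by
    have := congrFun h p
    simpa [Matrix.mulVec, dotProduct] using this
  calc ∑ r, A p r * (ψ r * star (ψ q)) = (∑ r, A p r * ψ r) * star (ψ q) := by
        rw [Finset.sum_mul]; exact Finset.sum_congr rfl fun r _ => by ring
    _ = 0 := by rw [hp, zero_mul]

lemma trace_proj_mul (ψ : n → ℂ) (χ : Matrix n n ℂ) :
    (proj ψ * χ).trace = star ψ ⬝ᵥ χ.mulVec ψ := by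
  simp only [Matrix.trace, Matrix.diag, Matrix.mul_apply, proj, Matrix.vecMulVec_apply,
    Pi.star_apply, dotProduct, Matrix.mulVec]
  rw [Finset.sum_comm]
  refine Finset.sum_congr rfl fun q _ => ?_
  rw [Finset.mul_sum]
  exact Finset.sum_congr rfl fun p _ => by ring

end ProjLemmas

lemma maxEnt_normalized {d : ℕ} (hd : 0 < d) : star (maxEnt d) ⬝ᵥ maxEnt d = 1 := by
  have hd' : (d : ℂ) ≠ 0 := Nat.cast_ne_zero.mpr hd.ne'
  have hsq : ((1 / Real.sqrt d : ℝ) : ℂ) * ((1 / Real.sqrt d : ℝ) : ℂ) = 1 / (d : ℂ) := by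
    rw [← Complex.ofReal_mul]
    rw [div_mul_div_comm, one_mul, Real.mul_self_sqrt (Nat.cast_nonneg d)]
    push_cast
    ring
  simp only [dotProduct, Pi.star_apply, maxEnt, Complex.star_def, apply_ite,
    map_zero, Complex.conj_ofReal, ite_mul, mul_ite, zero_mul, mul_zero,
    Fintype.sum_prod_type]
  simp only [Finset.sum_ite_eq, Finset.mem_univ, if_true, hsq]
  rw [Finset.sum_const, Finset.card_univ, Fintype.card_fin, nsmul_eq_mul]
  field_simp

/-- for a balanced strategy with process verification operator
`|Φ⟩⟨Φ| ≤ Θ ≤ 1` and spectral gap `ν = 1 − ‖Θ − |Φ⟩⟨Φ|‖`, the maximal passing probability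
satisfies `p_E(Θ, ε) ≤ 1 − νε` for all `ε ∈ [0,1]`. -/
theorem stmt_14 (d : ℕ) (hd : 0 < d)
    (Θ : Matrix (Fin d × Fin d) (Fin d × Fin d) ℂ)
    (hlow : (Θ - proj (maxEnt d)).PosSemidef)
    (hup : ((1 : Matrix (Fin d × Fin d) (Fin d × Fin d) ℂ) - Θ).PosSemidef)
    (ν : ℝ) (hν : ν = 1 - ‖Θ - proj (maxEnt d)‖) :
    ∀ ε ∈ Set.Icc (0 : ℝ) 1, pE d Θ ε ≤ 1 - ν * ε := by
  rintro ε ⟨hε0, hε1⟩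
  set Φ := maxEnt d with hΦdef
  set P := proj (maxEnt d) with hPdef
  set A := Θ - P with hAdef
  have hΦ : star Φ ⬝ᵥ Φ = 1 := maxEnt_normalized hd
  have hPΦ : P.mulVec Φ = Φ := by
    funext p
    simp only [hPdef, proj, Matrix.mulVec, dotProduct, Matrix.vecMulVec_apply,
      Pi.star_apply]
    have : ∑ q, Φ p * star (Φ q) * Φ q = Φ p * (star Φ ⬝ᵥ Φ) := by
      rw [dotProduct, Finset.mul_sum]
      exact Finset.sum_congr rfl fun q _ => by simp [mul_assoc]
    rw [this, hΦ, mul_one]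
  -- the norm bound ν ≤ 1
  have hν1 : ν ≤ 1 := by rw [hν]; have := norm_nonneg (Θ - P); linarith
  -- trace of χ is 1, and tr((1-Θ)χ) ≥ 0 gives tr(Θχ).re ≤ 1 for any feasible χ
  apply Real.sSup_le
  · rintro x ⟨χ, hχ, hptr, ht, rfl⟩
    -- trace of χ is 1
    have hd' : (d : ℂ) ≠ 0 := Nat.cast_ne_zero.mpr hd.ne'
    have htrχ : χ.trace = 1 := by
      have h1 : ∀ j, ptrace1 χ j j = 1 / (d : ℂ) := by
        intro j; rw [hptr]; simp [Matrix.one_apply]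
      have : χ.trace = ∑ j : Fin d, ptrace1 χ j j := by
        rw [Matrix.trace, Fintype.sum_prod_type]
        rw [Finset.sum_comm]
        rfl
      rw [this]
      simp only [h1]
      rw [Finset.sum_const, Finset.card_univ, Fintype.card_fin, nsmul_eq_mul]
      field_simp
    have hPχ : (P * χ).trace = star Φ ⬝ᵥ χ.mulVec Φ := trace_proj_mul Φ χ
    -- tr(Θχ).re ≤ 1
    have hle1 : ((Θ * χ).trace).re ≤ 1 := by
      have h0 := trace_mul_psd_nonneg hup hχ
      rw [complex_nonneg_iff] at h0
      have hexp : ((1 : Matrix (Fin d × Fin d) (Fin d × Fin d) ℂ) - Θ) * χ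
          = χ - Θ * χ := by rw [Matrix.sub_mul, Matrix.one_mul]
      rw [hexp, Matrix.trace_sub, htrχ] at h0
      have := h0.1
      simp only [Complex.sub_re, Complex.one_re] at this
      linarith
    by_cases hν0 : 0 ≤ ν
    · -- main case
      have hAΦ : A.mulVec Φ = 0 := by
        have h1 := hlow.dotProduct_mulVec_nonneg Φ
        have h2 := hup.dotProduct_mulVec_nonneg Φ
        have e1 : (Θ - P).mulVec Φ = Θ.mulVec Φ - Φ := by
          rw [Matrix.sub_mulVec, hPΦ]
        have e2 : ((1 : Matrix (Fin d × Fin d) (Fin d × Fin d) ℂ) - Θ).mulVec Φ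
            = Φ - Θ.mulVec Φ := by rw [Matrix.sub_mulVec, Matrix.one_mulVec]
        rw [e1, dotProduct_sub, hΦ] at h1
        rw [e2, dotProduct_sub, hΦ] at h2
        have hq0 : star Φ ⬝ᵥ A.mulVec Φ = 0 := by
          rw [hAdef, e1, dotProduct_sub, hΦ]
          have : star Φ ⬝ᵥ Θ.mulVec Φ = 1 := le_antisymm (sub_nonneg.mp h2) (sub_nonneg.mp h1)
          rw [this, sub_self]
        exact (hlow.dotProduct_mulVec_zero_iff Φ).mp hq0
      have hAP : A * P = 0 := mul_proj_eq_zero hAΦ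
      have hPA : P * A = 0 := by
        have h := congrArg Matrix.conjTranspose hAP
        rwa [Matrix.conjTranspose_mul, hlow.1, (proj_isHermitian (maxEnt d) : Pᴴ = P),
          Matrix.conjTranspose_zero] at h
      have hM := key_psd hlow (proj_isHermitian (maxEnt d)) (proj_mul_proj hΦ) hAP hPA
      have h0 := trace_mul_psd_nonneg hM hχ
      rw [complex_nonneg_iff] at h0
      -- expand the trace
      have hexp : ((‖A‖ : ℂ) • ((1 : Matrix (Fin d × Fin d) (Fin d × Fin d) ℂ) - P) - A) * χ
          = (‖A‖ : ℂ) • (χ - P * χ) - A * χ := by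
        rw [Matrix.sub_mul, Matrix.smul_mul, Matrix.sub_mul, Matrix.one_mul]
      rw [hexp, Matrix.trace_sub, Matrix.trace_smul, Matrix.trace_sub, htrχ, hPχ] at h0
      set t := star Φ ⬝ᵥ χ.mulVec Φ with htdef
      have him : ((‖A‖ : ℂ) • ((1 : ℂ) - t)).re = ‖A‖ * (1 - t.re) := by
        rw [smul_eq_mul, Complex.mul_re]
        simp
      have h1 := h0.1
      rw [Complex.sub_re, him] at h1
      -- tr(Θχ) = tr(Aχ) + tr(Pχ)
      have hsum : ((Θ * χ).trace).re = ((A * χ).trace).re + t.re := by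
        have : Θ * χ = A * χ + P * χ := by
          rw [hAdef, Matrix.sub_mul, sub_add_cancel]
        rw [this, Matrix.trace_add, Complex.add_re, hPχ]
      have hc : ‖A‖ = 1 - ν := by rw [hν, hAdef]; ring
      rw [hsum]
      rw [hc] at h1
      nlinarith [mul_le_mul_of_nonneg_left ht hν0]
    · push_neg at hν0
      nlinarith
  · by_cases hν0 : 0 ≤ ν
    · nlinarith
    · nlinarith
end
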